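/- Let K ∈ ℂ with |K| ≤ K₀, Re K ≥ 0. Suppose ξ, η : [t₀,∞) → ℂ × ℝ solve ξ'(t) = -i(Im K/(2tη(t)))|ξ(t)|²ξ(t) + J(t)sqrt(η(t)) and η'(t) = (Re K/t)|ξ(t)|², with η(t₀) = 1, where η(t) ≥ 1 for all t. Then z(t) := ξ(t)/sqrt(η(t)) solves z'(t) = -(K/(2t))|z(t)|²z(t) + J(t) on (t₀,∞). -/

import Mathlib

/-- the amplitude–phase decomposition z = ξ/√η transforms the
integrable system for (ξ,η) back into z' = -(K/(2t))|z|²z + J. -/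
theorem amplitude_phase_decomposition
    (K : ℂ) (K₀ t₀ : ℝ) (hK₀ : ‖K‖ ≤ K₀) (hKre : 0 ≤ K.re) (ht₀ : 1 ≤ t₀)
    (ξ : ℝ → ℂ) (η : ℝ → ℝ) (J : ℝ → ℂ)
    (hJ : Continuous J)
    (hη1 : ∀ t : ℝ, 1 ≤ η t) (hηinit : η t₀ = 1)
    (hξ : ∀ t : ℝ, t₀ < t →
      HasDerivAt ξ
        (-(Complex.I) * ((K.im / (2 * t * η t)) : ℝ) * (‖ξ t‖^2 : ℝ) * ξ t
          + J t * (Real.sqrt (η t) : ℂ)) t)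
    (hηd : ∀ t : ℝ, t₀ < t →
      HasDerivAt η (K.re / t * ‖ξ t‖^2) t) :
    ∀ t : ℝ, t₀ < t →
      HasDerivAt (fun s => ξ s / (Real.sqrt (η s) : ℂ))
        (-(K/(2*t)) * (‖ξ t / (Real.sqrt (η t) : ℂ)‖^2 : ℝ) *
            (ξ t / (Real.sqrt (η t) : ℂ)) + J t) t := by
  intro t ht
  have ht0 : (0:ℝ) < t := by linarith
  have hηt : (0:ℝ) < η t := lt_of_lt_of_le one_pos (hη1 t)
  have hs : (0:ℝ) < Real.sqrt (η t) := Real.sqrt_pos.mpr hηt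
  have hsq : Real.sqrt (η t) ^ 2 = η t := Real.sq_sqrt hηt.le
  have h1 : HasDerivAt (fun s => Real.sqrt (η s))
      (1 / (2 * Real.sqrt (η t)) * (K.re / t * ‖ξ t‖^2)) t :=
    (Real.hasDerivAt_sqrt hηt.ne').comp t (hηd t ht)
  have h2 : HasDerivAt (fun s => (Real.sqrt (η s) : ℂ))
      ((1 / (2 * Real.sqrt (η t)) * (K.re / t * ‖ξ t‖^2) : ℝ) : ℂ) t :=
    h1.ofReal_comp
  have hne : ((Real.sqrt (η t) : ℂ)) ≠ 0 := by
    exact_mod_cast hs.ne'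
  have hz := (hξ t ht).div h2 hne
  refine hz.congr_deriv (Eq.symm ?_)
  have hnorm : ‖ξ t / (Real.sqrt (η t) : ℂ)‖^2 = ‖ξ t‖^2 / η t := by
    rw [norm_div, div_pow, Complex.norm_real, Real.norm_of_nonneg hs.le, hsq]
  rw [hnorm]
  have hK : (K.re : ℂ) + (K.im : ℂ) * Complex.I = K := Complex.re_add_im K
  have hηne : ((η t : ℝ) : ℂ) ≠ 0 := by exact_mod_cast hηt.ne'
  have htne : ((t:ℝ):ℂ) ≠ 0 := by exact_mod_cast ht0.ne'
  have hsqC : ((Real.sqrt (η t) : ℂ))^2 = (η t : ℂ) := by exact_mod_cast hsq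
  rw [eq_div_iff (pow_ne_zero 2 hne)]
  push_cast
  rw [← hsqC]
  field_simp
  ring_nf
  linear_combination (((‖ξ t‖ : ℂ))^2 * ξ t) * hK
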